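/- For every n ≥ 1, the maximum, over all n×n square sign matrices A, of the number of entries of A equal to −1 is ⌊(n−1)/2⌋·⌈(n−1)/2⌉. -/
import Mathlib

/-- An `n × n` square sign matrix: a `{0, 1, -1}`-matrix whose rows and columns
all sum to 1, whose partial column sums lie in `{0, 1}`, and whose partial row
sums are nonnegative. -/
def IsSquareSign (n : ℕ) (A : Fin n → Fin n → ℤ) : Prop :=
  (∀ i j, A i j = -1 ∨ A i j = 0 ∨ A i j = 1) ∧
  (∀ j, ∑ i, A i j = 1) ∧
  (∀ i, ∑ j, A i j = 1) ∧
  (∀ i j : Fin n, 0 ≤ ∑ i' ∈ Finset.Iic i, A i' j ∧ ∑ i' ∈ Finset.Iic i, A i' j ≤ 1) ∧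
  (∀ i j : Fin n, 0 ≤ ∑ j' ∈ Finset.Iic j, A i j')

/-- An `n × n` magog matrix: a square sign matrix satisfying the
`(i,j)`-special inequalities (stated here with 0-based indices `i, j`,
corresponding to the paper's 1-based `i+1, j+1` with `1 ≤ i, j ≤ n-2`). -/
def IsMagog (n : ℕ) (A : Fin n → Fin n → ℤ) : Prop :=
  IsSquareSign n A ∧
  ∀ (i j : ℕ) (hi : i + 2 < n) (hj : j + 2 < n),
    0 ≤ (∑ j' ∈ Finset.Iic (⟨j, by omega⟩ : Fin n), A ⟨i + 1, by omega⟩ j')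
      + (∑ i' ∈ Finset.Iic (⟨i + 1, by omega⟩ : Fin n), A i' ⟨j + 1, by omega⟩)
      - (∑ i' ∈ Finset.Iic (⟨i, by omega⟩ : Fin n), A i' ⟨j, by omega⟩)

/-- The number of entries of `A` equal to `-1`. -/
def negCount (n : ℕ) (A : Fin n → Fin n → ℤ) : ℕ :=
  (Finset.univ.filter (fun p : Fin n × Fin n => A p.1 p.2 = -1)).card

/-! ### Auxiliary material -/

section Aux

/-- Left endpoint of the diamond region in column `j`. -/
def dL (n j : ℕ) : ℕ := max ((n-1)/2 - j) (j - (n-1)/2)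

/-- Right endpoint of the diamond region in column `j`. -/
def dR (n j : ℕ) : ℕ := min (j + (n-1)/2) (2*(n-1) - (n-1)/2 - j)

/-- The diamond matrix: the extremal square sign matrix. -/
def dMat (n i j : ℕ) : ℤ :=
  if dL n j ≤ i ∧ i ≤ dR n j then (if (i + j + (n-1)/2) % 2 = 0 then 1 else -1) else 0

lemma dMat_symm (n i j : ℕ) : dMat n i j = dMat n j i := by
  have hcond : (dL n j ≤ i ∧ i ≤ dR n j) ↔ (dL n i ≤ j ∧ j ≤ dR n i) := by
    unfold dL dR; omega
  have hpar : i + j + (n-1)/2 = j + i + (n-1)/2 := by ring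
  unfold dMat
  by_cases h : dL n j ≤ i ∧ i ≤ dR n j
  · rw [if_pos h, if_pos (hcond.mp h), hpar]
  · rw [if_neg h, if_neg (fun h' => h (hcond.mpr h'))]

lemma dMat_col_partial (n j : ℕ) (hj : j < n) (t : ℕ) :
    ∑ k ∈ Finset.range t, dMat n k j = (((min t (dR n j + 1) - dL n j) % 2 : ℕ) : ℤ) := by
  induction t with
  | zero => simp
  | succ t ih =>
    rw [Finset.sum_range_succ, ih]
    unfold dMat
    by_cases hc : dL n j ≤ t ∧ t ≤ dR n j
    · rw [if_pos hc]
      by_cases hp : (t + j + (n-1)/2) % 2 = 0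
      · rw [if_pos hp]; unfold dL dR at *; omega
      · rw [if_neg hp]; unfold dL dR at *; omega
    · rw [if_neg hc]; unfold dL dR at *; omega

lemma dMat_col_negpartial (n j : ℕ) (hj : j < n) (t : ℕ) :
    ∑ k ∈ Finset.range t, (if dMat n k j = -1 then (1:ℕ) else 0)
      = (min t (dR n j + 1) - dL n j) / 2 := by
  induction t with
  | zero => simp
  | succ t ih =>
    rw [Finset.sum_range_succ, ih]
    unfold dMat
    by_cases hc : dL n j ≤ t ∧ t ≤ dR n j
    · rw [if_pos hc]
      by_cases hp : (t + j + (n-1)/2) % 2 = 0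
      · rw [if_pos hp]; norm_num; unfold dL dR at *; omega
      · rw [if_neg hp]; norm_num; unfold dL dR at *; omega
    · rw [if_neg hc]; norm_num; unfold dL dR at *; omega

lemma dMat_col_sum (n j : ℕ) (hj : j < n) : ∑ k ∈ Finset.range n, dMat n k j = 1 := by
  rw [dMat_col_partial n j hj n]
  have : (min n (dR n j + 1) - dL n j) % 2 = 1 := by unfold dL dR; omega
  rw [this]; norm_num

lemma dMat_col_negcount (n j : ℕ) (hj : j < n) :
    ∑ k ∈ Finset.range n, (if dMat n k j = -1 then (1:ℕ) else 0) = min j (n - 1 - j) := by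
  rw [dMat_col_negpartial n j hj n]
  unfold dL dR; omega

lemma sum_Iic_fin {n : ℕ} {M : Type*} [AddCommMonoid M] (f : ℕ → M) (i : Fin n) :
    ∑ i' ∈ Finset.Iic i, f i'.val = ∑ k ∈ Finset.range (i.val+1), f k := by
  have h1 : ∑ i' ∈ Finset.Iic i, f i'.val
      = ∑ x ∈ (Finset.Iic i).map Fin.valEmbedding, f x :=
    (Finset.sum_map (Finset.Iic i) Fin.valEmbedding f).symm
  rw [h1, Fin.map_valEmbedding_Iic]
  congr 1
  ext x; simp [Nat.lt_succ_iff]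

lemma sum_min_range : ∀ n : ℕ, ∑ k ∈ Finset.range n, min k (n - 1 - k) = (n-1)/2 * (n/2) := by
  have key : ∀ n, ∀ m ≤ n, ∑ k ∈ Finset.range m, min k (m - 1 - k) = (m-1)/2 * (m/2) := by
    intro n
    induction n with
    | zero => intro m hm; interval_cases m; simp
    | succ n ih =>
      intro m hm
      match m, hm with
      | 0, _ => simp
      | 1, _ => simp
      | (m+2), hm =>
        have h0 : ∑ k ∈ Finset.range (m+2), min k (m + 2 - 1 - k)
            = ∑ k ∈ Finset.range (m+1), min (k+1) (m - k) := by
          rw [Finset.sum_range_succ']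
          have : ∀ k ∈ Finset.range (m+1), min (k+1) (m + 2 - 1 - (k+1)) = min (k+1) (m-k) := by
            intro k _; omega
          rw [Finset.sum_congr rfl this]
          simp
        have h2 : ∑ k ∈ Finset.range (m+1), min (k+1) (m - k)
            = ∑ k ∈ Finset.range m, min (k+1) (m - k) := by
          rw [Finset.sum_range_succ]
          have : min (m+1) (m - m) = 0 := by omega
          rw [this, add_zero]
        have h1 : ∀ k ∈ Finset.range m, min (k+1) (m-k) = min k (m - 1 - k) + 1 := by
          intro k hk; rw [Finset.mem_range] at hk; omega
        rw [h0, h2, Finset.sum_congr rfl h1, Finset.sum_add_distrib, Finset.sum_const,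
          ih m (by omega)]
        simp only [Finset.card_range, smul_eq_mul, mul_one]
        rcases Nat.even_or_odd' m with ⟨c, rfl | rfl⟩
        · have e1 : (2*c+2-1)/2 = c := by omega
          have e2 : (2*c+2)/2 = c+1 := by omega
          have e3 : (2*c-1)/2 = c - 1 := by omega
          have e4 : (2*c)/2 = c := by omega
          rw [e1, e2, e3, e4]
          rcases c with _ | c
          · simp
          · simp only [Nat.add_sub_cancel]; ring
        · have e1 : (2*c+1+2-1)/2 = c+1 := by omega
          have e2 : (2*c+1+2)/2 = c+1 := by omega
          have e3 : (2*c+1-1)/2 = c := by omega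
          have e4 : (2*c+1)/2 = c := by omega
          rw [e1, e2, e3, e4]; ring
  exact fun n => key n n le_rfl

lemma dMat_isSquareSign (n : ℕ) : IsSquareSign n (fun i j => dMat n i.val j.val) := by
  refine ⟨?_, ?_, ?_, ?_, ?_⟩
  · intro i j
    unfold dMat
    dsimp only
    split_ifs <;> simp
  · intro j
    rw [Fin.sum_univ_eq_sum_range (fun k => dMat n k j.val) n]
    exact dMat_col_sum n j.val j.isLt
  · intro i
    have h1 : ∀ j : Fin n, dMat n i.val j.val = dMat n j.val i.val :=
      fun j => dMat_symm n i.val j.val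
    rw [Finset.sum_congr rfl (fun j _ => h1 j),
      Fin.sum_univ_eq_sum_range (fun k => dMat n k i.val) n]
    exact dMat_col_sum n i.val i.isLt
  · intro i j
    rw [sum_Iic_fin (fun k => dMat n k j.val) i,
      dMat_col_partial n j.val j.isLt (i.val+1)]
    omega
  · intro i j
    have h1 : ∀ j' : Fin n, dMat n i.val j'.val = dMat n j'.val i.val :=
      fun j' => dMat_symm n i.val j'.val
    rw [Finset.sum_congr rfl (fun j' _ => h1 j'),
      sum_Iic_fin (fun k => dMat n k i.val) j,
      dMat_col_partial n i.val i.isLt (j.val+1)]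
    omega

lemma dMat_negCount (n : ℕ) :
    negCount n (fun i j => dMat n i.val j.val) = (n-1)/2 * (n/2) := by
  unfold negCount
  rw [Finset.card_filter, Fintype.sum_prod_type]
  have hrow : ∀ i : Fin n,
      (∑ j : Fin n, if dMat n i.val j.val = -1 then (1:ℕ) else 0) = min i.val (n-1-i.val) := by
    intro i
    have h1 : ∀ j : Fin n, (if dMat n i.val j.val = -1 then (1:ℕ) else 0)
        = (if dMat n j.val i.val = -1 then (1:ℕ) else 0) := by
      intro j; rw [dMat_symm]
    rw [Finset.sum_congr rfl (fun j _ => h1 j),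
      Fin.sum_univ_eq_sum_range (fun k => if dMat n k i.val = -1 then (1:ℕ) else 0) n]
    exact dMat_col_negcount n i.val i.isLt
  rw [Finset.sum_congr rfl (fun i _ => hrow i),
    Fin.sum_univ_eq_sum_range (fun k => min k (n-1-k)) n, sum_min_range]

lemma count_lemma {α : Type*} [Fintype α] (f : α → ℤ) (h : ∀ x, f x = 0 ∨ f x = 1) :
    ∑ x, f x = ((Finset.univ.filter (fun x => f x = 1)).card : ℤ) := by
  classical
  rw [← Finset.sum_filter_add_sum_filter_not Finset.univ (fun x => f x = 1) f]
  have h1 : ∑ x ∈ Finset.univ.filter (fun x => f x = 1), f x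
      = ((Finset.univ.filter (fun x => f x = 1)).card : ℤ) := by
    rw [Finset.sum_congr rfl (fun x hx => (Finset.mem_filter.mp hx).2)]
    simp
  have h2 : ∑ x ∈ Finset.univ.filter (fun x => ¬ f x = 1), f x = 0 := by
    refine Finset.sum_eq_zero (fun x hx => ?_)
    have := (Finset.mem_filter.mp hx).2
    rcases h x with h' | h' <;> simp_all
  rw [h1, h2, add_zero]

end Aux

/-- The maximum number of entries equal to `-1` over all `n × n` square sign
matrices is `⌊(n-1)/2⌋ * ⌈(n-1)/2⌉`. -/
theorem max_negOnes_squareSign (n : ℕ) (hn : 0 < n) :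
    IsGreatest {k : ℕ | ∃ A : Fin n → Fin n → ℤ, IsSquareSign n A ∧ negCount n A = k}
      ((n - 1) / 2 * (n / 2)) := by
  constructor
  · exact ⟨fun i j => dMat n i.val j.val, dMat_isSquareSign n, dMat_negCount n⟩
  · rintro k ⟨A, ⟨hent, hcol, hrow, hpc, hpr⟩, rfl⟩
    classical
    -- partial sums over `Iio` are in `{0, 1}`
    have hIio : ∀ (i : Fin n) (j : Fin n),
        0 ≤ ∑ i' ∈ Finset.Iio i, A i' j ∧ ∑ i' ∈ Finset.Iio i, A i' j ≤ 1 := by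
      intro i j
      rcases Nat.eq_zero_or_pos i.val with h0 | h0
      · have he : Finset.Iio i = ∅ := by
          ext x
          simp only [Finset.mem_Iio, Finset.notMem_empty, iff_false, not_lt, Fin.le_def]
          omega
        simp [he]
      · have hlt : i.val - 1 < n := lt_of_le_of_lt (Nat.sub_le _ _) i.isLt
        have he : Finset.Iio i = Finset.Iic (⟨i.val - 1, hlt⟩ : Fin n) := by
          ext x
          simp only [Finset.mem_Iio, Finset.mem_Iic, Fin.lt_def, Fin.le_def]
          omega
        rw [he]; exact hpc _ j
    -- decomposition of `Iic` sums
    have hIicIio : ∀ (i : Fin n) (j : Fin n),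
        ∑ i' ∈ Finset.Iic i, A i' j = ∑ i' ∈ Finset.Iio i, A i' j + A i j := by
      intro i j
      rw [← Finset.Iio_insert i, Finset.sum_insert (by simp)]
      exact add_comm _ _
    -- at a `-1` entry, the partial sum above is 1 and through is 0
    have hneg : ∀ (i : Fin n) (j : Fin n), A i j = -1 →
        ∑ i' ∈ Finset.Iic i, A i' j = 0 ∧ ∑ i' ∈ Finset.Iio i, A i' j = 1 := by
      intro i j h
      have h1 := hpc i j
      have h2 := hIio i j
      have h3 := hIicIio i j
      rw [h] at h3
      omega
    -- suffix column sums
    have hIoi : ∀ (i : Fin n) (j : Fin n),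
        ∑ i' ∈ Finset.Ioi i, A i' j = 1 - ∑ i' ∈ Finset.Iic i, A i' j := by
      intro i j
      have hcompl : (Finset.Iic i)ᶜ = Finset.Ioi i := by
        ext x; simp
      have hu := Finset.sum_add_sum_compl (Finset.Iic i) (fun i' => A i' j)
      rw [hcompl, hcol j] at hu
      omega
    -- per-row bound
    have hrowbound : ∀ i : Fin n,
        (Finset.univ.filter (fun j => A i j = -1)).card ≤ min i.val (n - 1 - i.val) := by
      intro i
      have hb1 : (Finset.univ.filter (fun j => A i j = -1)).card ≤ i.val := by
        have hsub : Finset.univ.filter (fun j => A i j = -1)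
            ⊆ Finset.univ.filter (fun j => ∑ i' ∈ Finset.Iio i, A i' j = 1) := by
          intro j hj
          rw [Finset.mem_filter] at *
          exact ⟨Finset.mem_univ _, (hneg i j hj.2).2⟩
        have hcount : ∑ j : Fin n, (∑ i' ∈ Finset.Iio i, A i' j) = (i.val : ℤ) := by
          rw [Finset.sum_comm, Finset.sum_congr rfl (fun i' _ => hrow i')]
          simp
        have hcl := count_lemma (fun j : Fin n => ∑ i' ∈ Finset.Iio i, A i' j)
          (fun j => by show ∑ i' ∈ Finset.Iio i, A i' j = 0 ∨ ∑ i' ∈ Finset.Iio i, A i' j = 1; have := hIio i j; omega)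
        have : ((Finset.univ.filter
            (fun j => ∑ i' ∈ Finset.Iio i, A i' j = 1)).card : ℤ) = (i.val : ℤ) :=
          hcl.symm.trans hcount
        calc (Finset.univ.filter (fun j => A i j = -1)).card
            ≤ (Finset.univ.filter (fun j => ∑ i' ∈ Finset.Iio i, A i' j = 1)).card :=
              Finset.card_le_card hsub
          _ = i.val := by exact_mod_cast this
      have hb2 : (Finset.univ.filter (fun j => A i j = -1)).card ≤ n - 1 - i.val := by
        have hsub : Finset.univ.filter (fun j => A i j = -1)
            ⊆ Finset.univ.filter (fun j => ∑ i' ∈ Finset.Ioi i, A i' j = 1) := by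
          intro j hj
          rw [Finset.mem_filter] at *
          refine ⟨Finset.mem_univ _, ?_⟩
          have h1 := (hneg i j hj.2).1
          have h2 := hIoi i j
          omega
        have hcount : ∑ j : Fin n, (∑ i' ∈ Finset.Ioi i, A i' j)
            = ((n - 1 - i.val : ℕ) : ℤ) := by
          rw [Finset.sum_comm, Finset.sum_congr rfl (fun i' _ => hrow i')]
          simp [Fin.card_Ioi]
        have hcl := count_lemma (fun j : Fin n => ∑ i' ∈ Finset.Ioi i, A i' j)
          (fun j => by show ∑ i' ∈ Finset.Ioi i, A i' j = 0 ∨ ∑ i' ∈ Finset.Ioi i, A i' j = 1; have := hpc i j; have := hIoi i j; omega)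
        have : ((Finset.univ.filter
            (fun j => ∑ i' ∈ Finset.Ioi i, A i' j = 1)).card : ℤ)
            = ((n - 1 - i.val : ℕ) : ℤ) := hcl.symm.trans hcount
        calc (Finset.univ.filter (fun j => A i j = -1)).card
            ≤ (Finset.univ.filter (fun j => ∑ i' ∈ Finset.Ioi i, A i' j = 1)).card :=
              Finset.card_le_card hsub
          _ = n - 1 - i.val := by exact_mod_cast this
      omega
    -- sum up
    have htot : negCount n A = ∑ i : Fin n, (Finset.univ.filter (fun j => A i j = -1)).card := by
      unfold negCount
      rw [Finset.card_filter, Fintype.sum_prod_type]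
      exact Finset.sum_congr rfl (fun i _ => (Finset.card_filter (fun j => A i j = -1) Finset.univ).symm)
    rw [htot]
    calc ∑ i : Fin n, (Finset.univ.filter (fun j => A i j = -1)).card
        ≤ ∑ i : Fin n, min i.val (n - 1 - i.val) :=
          Finset.sum_le_sum (fun i _ => hrowbound i)
      _ = ∑ k ∈ Finset.range n, min k (n - 1 - k) :=
          Fin.sum_univ_eq_sum_range (fun k => min k (n-1-k)) n
      _ = (n - 1) / 2 * (n / 2) := sum_min_range n
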